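/- The differential d^p of the Lie-Rinehart complex sends A-multilinear alternating maps to A-multilinear alternating maps: if ψ: Λ^p g → W is A-linear, then d^p ψ: Λ^{p+1} g → W is also A-linear. -/
import Mathlib


open scoped TensorProduct BigOperators

structure LieRinehart (k A g : Type*) [CommRing k] [CommRing A] [Algebra k A]
    [LieRing g] [LieAlgebra k g] [Module A g] [IsScalarTower k A g] where
  anchor : g → Module.End k A
  anchor_add : ∀ x y : g, anchor (x + y) = anchor x + anchor y
  anchor_smul : ∀ (a : A) (x : g) (b : A), anchor (a • x) b = a * anchor x b
  anchor_leibniz : ∀ (x : g) (a b : A), anchor x (a * b) = a * anchor x b + anchor x a * b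
  anchor_bracket : ∀ x y : g, anchor ⁅x, y⁆ = ⁅anchor x, anchor y⁆
  bracket_smul : ∀ (a : A) (x y : g), ⁅x, a • y⁆ = a • ⁅x, y⁆ + anchor x a • y

variable {k A g : Type*} [CommRing k] [CommRing A] [Algebra k A]
  [LieRing g] [LieAlgebra k g] [Module A g] [IsScalarTower k A g]

structure LRConnection (L : LieRinehart k A g) (W : Type*) [AddCommGroup W]
    [Module k W] [Module A W] [IsScalarTower k A W] where
  conn : g → Module.End k W
  conn_add : ∀ x y : g, conn (x + y) = conn x + conn y
  conn_smul : ∀ (a : A) (x : g) (w : W), conn (a • x) w = a • conn x w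
  leibniz : ∀ (x : g) (a : A) (w : W), conn x (a • w) = a • conn x w + L.anchor x a • w

variable {L : LieRinehart k A g}
variable {W W' : Type*} [AddCommGroup W] [Module k W] [Module A W] [IsScalarTower k A W]
  [AddCommGroup W'] [Module k W'] [Module A W'] [IsScalarTower k A W']

/-- The curvature of a connection, as a `k`-linear endomorphism. -/
def curvK (D : LRConnection L W) (x y : g) : Module.End k W :=
  ⁅D.conn x, D.conn y⁆ - D.conn ⁅x, y⁆

/-- Remove the entries at positions `i < j` from a tuple. -/
def remove2 {n : ℕ} (v : Fin (n + 2) → g) (i j : Fin (n + 2)) (h : i < j) : Fin n → g :=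
  fun m =>
    v (i.succAbove ((j.pred (by rintro rfl; exact absurd h (by simp))).succAbove m))

/-- The Lie–Rinehart (Chevalley–Eilenberg style) differential on cochains with values in a
module with connection. -/
noncomputable def lrD (D : LRConnection L W) {p : ℕ}
    (ψ : (Fin (p + 1) → g) → W) : (Fin (p + 2) → g) → W := fun v =>
  (∑ i : Fin (p + 2), ((-1 : ℤ) ^ (i : ℕ)) • D.conn (v i) (ψ fun m => v (i.succAbove m)))
    + ∑ i : Fin (p + 2), ∑ j : Fin (p + 2),
        if h : i < j then
          ((-1 : ℤ) ^ ((i : ℕ) + (j : ℕ))) • ψ (Fin.cons ⁅v i, v j⁆ (remove2 v i j h))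
        else 0

/-- The canonical connection on `A` itself, given by the anchor map. -/
def anchorConnection (L : LieRinehart k A g) : LRConnection L A where
  conn := L.anchor
  conn_add := L.anchor_add
  conn_smul := fun a x w => by rw [L.anchor_smul, smul_eq_mul]
  leibniz := fun x a w => by
    simp only [smul_eq_mul]; rw [L.anchor_leibniz]

/-- The induced action `ad∇` of a connection on `End_A(W)`. -/
noncomputable def adAct (D : LRConnection L W) (x : g) (φ : W →ₗ[A] W) : W →ₗ[A] W where
  toFun w := D.conn x (φ w) - φ (D.conn x w)
  map_add' u v := by simp only [map_add]; abel
  map_smul' a w := by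
    simp only [map_smul, RingHom.id_apply, D.leibniz, map_add, smul_sub]
    abel

/-- The Lie–Rinehart differential on `End_A(W)`-valued cochains, using `ad∇`. -/
noncomputable def lrDEnd (D : LRConnection L W) {p : ℕ}
    (ψ : (Fin (p + 1) → g) → (W →ₗ[A] W)) : (Fin (p + 2) → g) → (W →ₗ[A] W) := fun v =>
  (∑ i : Fin (p + 2), ((-1 : ℤ) ^ (i : ℕ)) • adAct D (v i) (ψ fun m => v (i.succAbove m)))
    + ∑ i : Fin (p + 2), ∑ j : Fin (p + 2),
        if h : i < j then
          ((-1 : ℤ) ^ ((i : ℕ) + (j : ℕ))) • ψ (Fin.cons ⁅v i, v j⁆ (remove2 v i j h))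
        else 0

/-- `σ` is a `(p,q)`-shuffle: strictly increasing on the first `p` and the last `q` positions. -/
def IsShuffle (p q : ℕ) (σ : Equiv.Perm (Fin (p + q))) : Prop :=
  (∀ i j : Fin (p + q), i < j → (j : ℕ) < p → σ i < σ j) ∧
    (∀ i j : Fin (p + q), i < j → p ≤ (i : ℕ) → σ i < σ j)

open Classical in
/-- The exterior (shuffle) product of cochains, combined with a product `f` on values. -/
noncomputable def wedge {α β γ : Type*} [AddCommGroup γ] {p q : ℕ}
    (x : (Fin p → g) → α) (y : (Fin q → g) → β) (f : α → β → γ) :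
    (Fin (p + q) → g) → γ := fun v =>
  ∑ σ : Equiv.Perm (Fin (p + q)),
    if IsShuffle p q σ then
      ((Equiv.Perm.sign σ : ℤ)) •
        f (x fun i => v (σ (Fin.castAdd q i))) (y fun i => v (σ (Fin.natAdd p i)))
    else 0

/-- Wedge powers of an `End_A(W)`-valued `2`-cochain (e.g. the curvature); `powC R n = R^n`. -/
noncomputable def powC (R : (Fin 2 → g) → (W →ₗ[A] W)) :
    (n : ℕ) → (Fin (2 * n) → g) → (W →ₗ[A] W)
  | 0 => fun _ => LinearMap.id
  | n + 1 => wedge (powC R n) R fun f1 f2 => f1 ∘ₗ f2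

/-- Reindexing a tuple along an equality of lengths. -/
def recast {n m : ℕ} (h : n = m) (v : Fin m → g) : Fin n → g := fun i => v (Fin.cast h i)


section Aux

theorem coe_succAbove' {n : ℕ} (i : Fin (n+1)) (k : Fin n) :
    (i.succAbove k : ℕ) = if (k : ℕ) < (i : ℕ) then (k : ℕ) else (k : ℕ) + 1 := by
  rcases lt_or_ge (Fin.castSucc k) i with h | h
  · rw [Fin.succAbove_of_castSucc_lt _ _ h, if_pos]
    · rfl
    · exact h
  · rw [Fin.succAbove_of_le_castSucc _ _ h, if_neg]
    · rfl
    · exact not_lt.2 h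

theorem map_cons_self_succAbove {n : ℕ} (ψ : AlternatingMap A g W (Fin (n+1)))
    (w : Fin (n+1) → g) (t : Fin (n+1)) :
    ψ (Fin.cons (w t) (w ∘ t.succAbove)) = ((-1 : ℤ) ^ (t : ℕ)) • ψ w := by
  have hfun : Fin.cons (w t) (w ∘ t.succAbove) = w ∘ ⇑(t.cycleRange.symm) := by
    funext m
    refine Fin.cases ?_ ?_ m
    · simp
    · intro j; simp
  have hperm := ψ.map_perm w (t.cycleRange⁻¹)
  have hco : w ∘ ⇑(t.cycleRange.symm) = w ∘ ⇑(t.cycleRange⁻¹) := rfl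
  rw [hfun, hco, hperm]
  have hsign : Equiv.Perm.sign (t.cycleRange⁻¹) = (-1 : ℤˣ) ^ (t : ℕ) := by
    rw [map_inv, Fin.sign_cycleRange]; simp
  rw [hsign, Units.smul_def]
  norm_cast


theorem map_remove2_gt {p : ℕ} (ψ : AlternatingMap A g W (Fin (p+1)))
    (v : Fin (p+2) → g) (i₀ j : Fin (p+2)) (h : i₀ < j) :
    ψ (Fin.cons (v i₀) (remove2 v i₀ j h)) =
      ((-1 : ℤ) ^ (i₀ : ℕ)) • ψ (fun m => v (j.succAbove m)) := by
  have h' : (i₀ : ℕ) < (j : ℕ) := h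
  have hj : (j : ℕ) < p + 2 := j.isLt
  have hi : (i₀ : ℕ) < p + 1 := by omega
  set w : Fin (p+1) → g := fun m => v (j.succAbove m) with hw
  set t : Fin (p+1) := ⟨(i₀ : ℕ), hi⟩ with ht
  have hwt : w t = v i₀ := by
    show v (j.succAbove t) = v i₀
    congr 1
    apply Fin.ext
    rw [coe_succAbove']
    simp only [ht]
    rw [if_pos h']
  have hcomp : (w ∘ t.succAbove) = remove2 v i₀ j h := by
    funext m
    have hm := m.isLt
    show v (j.succAbove (t.succAbove m)) =
      v (i₀.succAbove ((j.pred (by rintro rfl; exact absurd h (by simp))).succAbove m))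
    congr 1
    apply Fin.ext
    simp only [coe_succAbove', Fin.coe_pred, ht]
    split_ifs <;> omega
  have := map_cons_self_succAbove ψ w t
  rw [hwt, hcomp] at this
  rw [this]

theorem map_remove2_lt {p : ℕ} (ψ : AlternatingMap A g W (Fin (p+1)))
    (v : Fin (p+2) → g) (i₀ j : Fin (p+2)) (h : j < i₀) :
    ψ (Fin.cons (v i₀) (remove2 v j i₀ h)) =
      ((-1 : ℤ) ^ ((i₀ : ℕ) - 1)) • ψ (fun m => v (j.succAbove m)) := by
  have h' : (j : ℕ) < (i₀ : ℕ) := h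
  have hj : (i₀ : ℕ) < p + 2 := i₀.isLt
  have hi : (i₀ : ℕ) - 1 < p + 1 := by omega
  set w : Fin (p+1) → g := fun m => v (j.succAbove m) with hw
  set t : Fin (p+1) := ⟨(i₀ : ℕ) - 1, hi⟩ with ht
  have hwt : w t = v i₀ := by
    show v (j.succAbove t) = v i₀
    congr 1
    apply Fin.ext
    rw [coe_succAbove']
    simp only [ht]
    rw [if_neg (by omega)]
    omega
  have hcomp : (w ∘ t.succAbove) = remove2 v j i₀ h := by
    funext m
    have hm := m.isLt
    show v (j.succAbove (t.succAbove m)) =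
      v (j.succAbove ((i₀.pred (by rintro rfl; exact absurd h (by simp))).succAbove m))
    congr 1
  have := map_cons_self_succAbove ψ w t
  rw [hwt, hcomp] at this
  rw [this]

end Aux



theorem lrD_smul_update (D : LRConnection L W) {p : ℕ}
    (ψ : AlternatingMap A g W (Fin (p + 1)))
    (v : Fin (p + 2) → g) (i₀ : Fin (p + 2)) (a : A) :
    lrD D ⇑ψ (Function.update v i₀ (a • v i₀)) = a • lrD D ⇑ψ v := by
  classical
  set u : Fin (p+2) → g := Function.update v i₀ (a • v i₀) with hu
  have hui : u i₀ = a • v i₀ := Function.update_self _ _ _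
  have hune : ∀ j, j ≠ i₀ → u j = v j := fun j hj => Function.update_of_ne hj _ _
  -- first sum, termwise
  have hS1 : ∀ j : Fin (p+2),
      ((-1 : ℤ) ^ (j : ℕ)) • D.conn (u j) (ψ fun m => u (j.succAbove m))
      = a • (((-1 : ℤ) ^ (j : ℕ)) • D.conn (v j) (ψ fun m => v (j.succAbove m)))
        + (if j = i₀ then 0 else ((-1 : ℤ) ^ (j : ℕ)) • (L.anchor (v j) a • ψ (fun m => v (j.succAbove m)))) := by
    intro j
    by_cases hj : j = i₀
    · subst hj
      have hcomp : (fun m => u (j.succAbove m)) = fun m => v (j.succAbove m) := by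
        funext m; exact hune _ (Fin.succAbove_ne j m)
      rw [if_pos rfl, add_zero, hcomp, hui, D.conn_smul]
      exact smul_comm _ _ _
    · rw [if_neg hj]
      obtain ⟨m, hm⟩ := Fin.exists_succAbove_eq (Ne.symm hj : i₀ ≠ j)
      have hcomp : (fun k => u (j.succAbove k)) =
          Function.update (fun k => v (j.succAbove k)) m (a • v i₀) := by
        funext k
        by_cases hk : k = m
        · subst hk
          rw [Function.update_self]
          show u (j.succAbove k) = a • v i₀
          rw [hm, hui]
        · rw [Function.update_of_ne hk]
          exact hune _ (fun hcon => hk (Fin.succAbove_right_injective (hcon.trans hm.symm)))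
      have hψ : ψ (fun k => u (j.succAbove k)) = a • ψ (fun k => v (j.succAbove k)) := by
        rw [hcomp]
        have hval : a • v i₀ = a • ((fun k => v (j.succAbove k)) m) := by
          simp only [hm]
        rw [hval, ψ.map_update_smul, Function.update_eq_self]
      rw [hune j hj, hψ, D.leibniz, smul_add, smul_comm ((-1 : ℤ) ^ (j : ℕ)) a]
  -- second sum, termwise
  have hS2 : ∀ (i j : Fin (p+2)) (h : i < j),
      ((-1 : ℤ) ^ ((i : ℕ) + (j : ℕ))) • ψ (Fin.cons ⁅u i, u j⁆ (remove2 u i j h))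
      = a • (((-1 : ℤ) ^ ((i : ℕ) + (j : ℕ))) • ψ (Fin.cons ⁅v i, v j⁆ (remove2 v i j h)))
        + (if i = i₀ then -(((-1 : ℤ) ^ (j : ℕ)) • (L.anchor (v j) a • ψ (fun m => v (j.succAbove m))))
           else if j = i₀ then -(((-1 : ℤ) ^ (i : ℕ)) • (L.anchor (v i) a • ψ (fun m => v (i.succAbove m)))) else 0) := by
    intro i j h
    have h' : (i : ℕ) < (j : ℕ) := h
    by_cases hii : i = i₀
    · subst hii
      have hjj : j ≠ i := by intro hc; rw [hc] at h; exact lt_irrefl _ h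
      have hrem : remove2 u i j h = remove2 v i j h := by
        funext m
        simp only [remove2]
        exact hune _ (Fin.succAbove_ne i _)
      have hbr : ⁅u i, u j⁆ = a • ⁅v i, v j⁆ - L.anchor (v j) a • v i := by
        rw [hui, hune j hjj, ← lie_skew (a • v i) (v j), L.bracket_smul, neg_add,
          ← smul_neg, lie_skew, sub_eq_add_neg]
      have e0 : ∀ y : g, (Fin.cons y (remove2 v i j h) : Fin (p+1) → g) =
          Function.update (Fin.cons (α := fun _ => g) ⁅v i, v j⁆ (remove2 v i j h))
            (0 : Fin (p+1)) y := by
        intro y; rw [Fin.update_cons_zero]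
      have hψ : ψ (Fin.cons (a • ⁅v i, v j⁆ - L.anchor (v j) a • v i) (remove2 v i j h))
          = a • ψ (Fin.cons ⁅v i, v j⁆ (remove2 v i j h))
            - L.anchor (v j) a • ψ (Fin.cons (v i) (remove2 v i j h)) := by
        rw [e0 (a • ⁅v i, v j⁆ - L.anchor (v j) a • v i)]
        simp only [AlternatingMap.map_update_sub, AlternatingMap.map_update_smul]
        simp only [Fin.update_cons_zero]
      have hsgn : ((-1 : ℤ) ^ ((i : ℕ) + (j : ℕ))) * ((-1 : ℤ) ^ (i : ℕ))
          = (-1 : ℤ) ^ (j : ℕ) := by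
        rw [← pow_add, neg_one_pow_eq_pow_mod_two,
          show ((i : ℕ) + (j : ℕ) + (i : ℕ)) % 2 = (j : ℕ) % 2 from by omega,
          ← neg_one_pow_eq_pow_mod_two]
      rw [hbr, hrem, hψ, map_remove2_gt ψ v i j h, if_pos rfl, smul_sub,
        smul_comm ((-1 : ℤ) ^ ((i : ℕ) + (j : ℕ))) a,
        smul_comm ((-1 : ℤ) ^ ((i : ℕ) + (j : ℕ))) (L.anchor (v j) a),
        smul_smul ((-1 : ℤ) ^ ((i : ℕ) + (j : ℕ))) ((-1 : ℤ) ^ (i : ℕ)), hsgn,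
        smul_comm (L.anchor (v j) a) ((-1 : ℤ) ^ (j : ℕ)), sub_eq_add_neg]
    · by_cases hjj : j = i₀
      · subst hjj
        have hrem : remove2 u i j h = remove2 v i j h := by
          funext m
          simp only [remove2]
          apply hune
          rw [Fin.ne_iff_vne]
          have hm := m.isLt
          simp only [coe_succAbove', Fin.coe_pred]
          split_ifs <;> omega
        have hbr : ⁅u i, u j⁆ = a • ⁅v i, v j⁆ + L.anchor (v i) a • v j := by
          rw [hune i hii, hui, L.bracket_smul]
        have e0 : ∀ y : g, (Fin.cons y (remove2 v i j h) : Fin (p+1) → g) =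
            Function.update (Fin.cons (α := fun _ => g) ⁅v i, v j⁆ (remove2 v i j h))
              (0 : Fin (p+1)) y := by
          intro y; rw [Fin.update_cons_zero]
        have hψ : ψ (Fin.cons (a • ⁅v i, v j⁆ + L.anchor (v i) a • v j) (remove2 v i j h))
            = a • ψ (Fin.cons ⁅v i, v j⁆ (remove2 v i j h))
              + L.anchor (v i) a • ψ (Fin.cons (v j) (remove2 v i j h)) := by
          rw [e0 (a • ⁅v i, v j⁆ + L.anchor (v i) a • v j)]
          simp only [AlternatingMap.map_update_add, AlternatingMap.map_update_smul]
          simp only [Fin.update_cons_zero]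
        have hsgn : ((-1 : ℤ) ^ ((i : ℕ) + (j : ℕ))) * ((-1 : ℤ) ^ ((j : ℕ) - 1))
            = -((-1 : ℤ) ^ (i : ℕ)) := by
          have hneg : -((-1 : ℤ) ^ (i : ℕ)) = (-1 : ℤ) ^ ((i : ℕ) + 1) := by
            rw [pow_succ]; ring
          rw [hneg, ← pow_add, neg_one_pow_eq_pow_mod_two,
            show ((i : ℕ) + (j : ℕ) + ((j : ℕ) - 1)) % 2 = ((i : ℕ) + 1) % 2 from by omega,
            ← neg_one_pow_eq_pow_mod_two]
        rw [hbr, hrem, hψ, map_remove2_lt ψ v j i h, if_neg hii, if_pos rfl, smul_add,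
          smul_comm ((-1 : ℤ) ^ ((i : ℕ) + (j : ℕ))) a,
          smul_comm ((-1 : ℤ) ^ ((i : ℕ) + (j : ℕ))) (L.anchor (v i) a),
          smul_smul ((-1 : ℤ) ^ ((i : ℕ) + (j : ℕ))) ((-1 : ℤ) ^ ((j : ℕ) - 1)), hsgn,
          neg_smul, smul_neg, smul_comm (L.anchor (v i) a) ((-1 : ℤ) ^ (i : ℕ))]
      · -- both differ from i₀
        have hbr : ⁅u i, u j⁆ = ⁅v i, v j⁆ := by rw [hune i hii, hune j hjj]
        have hj0 : j ≠ 0 := by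
          rintro rfl; exact absurd h (by simp)
        have hji : i.succAbove (j.pred hj0) = j := by
          apply Fin.ext
          rw [coe_succAbove', Fin.coe_pred, if_neg (by omega)]
          omega
        obtain ⟨m1, hm1⟩ := Fin.exists_succAbove_eq (Ne.symm hii : i₀ ≠ i)
        have hm1ne : m1 ≠ j.pred hj0 := by
          intro hc; rw [hc, hji] at hm1; exact hjj hm1
        obtain ⟨m2, hm2⟩ := Fin.exists_succAbove_eq hm1ne
        have hidx : i.succAbove ((j.pred hj0).succAbove m2) = i₀ := by rw [hm2, hm1]
        have hrem : remove2 u i j h = Function.update (remove2 v i j h) m2 (a • v i₀) := by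
          funext k
          simp only [remove2]
          by_cases hk : k = m2
          · subst hk
            rw [Function.update_self, hidx, hui]
          · rw [Function.update_of_ne hk]
            apply hune
            intro hcon
            apply hk
            exact Fin.succAbove_right_injective
              (Fin.succAbove_right_injective (hcon.trans hidx.symm))
        have hψ : ψ (Fin.cons ⁅v i, v j⁆ (Function.update (remove2 v i j h) m2 (a • v i₀)))
            = a • ψ (Fin.cons ⁅v i, v j⁆ (remove2 v i j h)) := by
          rw [Fin.cons_update]
          have hval : a • v i₀
              = a • (Fin.cons (α := fun _ => g) ⁅v i, v j⁆ (remove2 v i j h) m2.succ) := by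
            rw [Fin.cons_succ]
            simp only [remove2]
            rw [hidx]
          rw [hval, ψ.map_update_smul, Function.update_eq_self]
        rw [hbr, hrem, hψ, if_neg hii, if_neg hjj, add_zero]
        exact smul_comm _ _ _
  -- assemble
  simp only [lrD]
  have hsum1 : (∑ j : Fin (p+2), ((-1 : ℤ) ^ (j : ℕ)) • D.conn (u j) (ψ fun m => u (j.succAbove m)))
      = a • (∑ j : Fin (p+2), ((-1 : ℤ) ^ (j : ℕ)) • D.conn (v j) (ψ fun m => v (j.succAbove m)))
        + ∑ j : Fin (p+2), (if j = i₀ then 0 else ((-1 : ℤ) ^ (j : ℕ)) • (L.anchor (v j) a • ψ (fun m => v (j.succAbove m)))) := by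
    rw [Finset.smul_sum, ← Finset.sum_add_distrib]
    exact Finset.sum_congr rfl fun j _ => hS1 j
  have hsum2 : (∑ i : Fin (p+2), ∑ j : Fin (p+2),
        if h : i < j then
          ((-1 : ℤ) ^ ((i : ℕ) + (j : ℕ))) • ψ (Fin.cons ⁅u i, u j⁆ (remove2 u i j h))
        else 0)
      = a • (∑ i : Fin (p+2), ∑ j : Fin (p+2),
          if h : i < j then
            ((-1 : ℤ) ^ ((i : ℕ) + (j : ℕ))) • ψ (Fin.cons ⁅v i, v j⁆ (remove2 v i j h))
          else 0)
        + ∑ i : Fin (p+2), ∑ j : Fin (p+2),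
            (if i < j then
              (if i = i₀ then -(((-1 : ℤ) ^ (j : ℕ)) • (L.anchor (v j) a • ψ (fun m => v (j.succAbove m))))
               else if j = i₀ then -(((-1 : ℤ) ^ (i : ℕ)) • (L.anchor (v i) a • ψ (fun m => v (i.succAbove m)))) else 0)
             else 0) := by
    rw [Finset.smul_sum, ← Finset.sum_add_distrib]
    refine Finset.sum_congr rfl fun i _ => ?_
    rw [Finset.smul_sum, ← Finset.sum_add_distrib]
    refine Finset.sum_congr rfl fun j _ => ?_
    by_cases h : i < j
    · rw [dif_pos h, dif_pos h, if_pos h]; exact hS2 i j h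
    · rw [dif_neg h, dif_neg h, if_neg h]; simp
  have hX : (∑ i : Fin (p+2), ∑ j : Fin (p+2),
        (if i < j then
          (if i = i₀ then -(((-1 : ℤ) ^ (j : ℕ)) • (L.anchor (v j) a • ψ (fun m => v (j.succAbove m))))
           else if j = i₀ then -(((-1 : ℤ) ^ (i : ℕ)) • (L.anchor (v i) a • ψ (fun m => v (i.succAbove m)))) else 0)
         else 0))
      = (∑ j : Fin (p+2), (if i₀ < j then -(((-1 : ℤ) ^ (j : ℕ)) • (L.anchor (v j) a • ψ (fun m => v (j.succAbove m)))) else 0))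
        + ∑ j : Fin (p+2), (if j < i₀ then -(((-1 : ℤ) ^ (j : ℕ)) • (L.anchor (v j) a • ψ (fun m => v (j.succAbove m)))) else 0) := by
    have hsplit : ∀ i j : Fin (p+2),
        (if i < j then
          (if i = i₀ then -(((-1 : ℤ) ^ (j : ℕ)) • (L.anchor (v j) a • ψ (fun m => v (j.succAbove m))))
           else if j = i₀ then -(((-1 : ℤ) ^ (i : ℕ)) • (L.anchor (v i) a • ψ (fun m => v (i.succAbove m)))) else 0)
         else 0)
        = (if i = i₀ then (if i₀ < j then -(((-1 : ℤ) ^ (j : ℕ)) • (L.anchor (v j) a • ψ (fun m => v (j.succAbove m)))) else 0) else 0)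
          + (if j = i₀ then (if i < i₀ then -(((-1 : ℤ) ^ (i : ℕ)) • (L.anchor (v i) a • ψ (fun m => v (i.succAbove m)))) else 0) else 0) := by
      intro i j
      by_cases hii : i = i₀
      · subst hii
        by_cases hij : i < j
        · have hji : j ≠ i := by intro hc; rw [hc] at hij; exact lt_irrefl _ hij
          simp [hij, hji]
        · by_cases hji : j = i
          · simp [hji]
          · simp [hij, hji]
      · by_cases hjj : j = i₀
        · subst hjj
          by_cases hij : i < j <;> simp [hij, hii]
        · by_cases hij : i < j <;> simp [hij, hii, hjj]
    rw [Finset.sum_congr rfl fun i _ => Finset.sum_congr rfl fun j _ => hsplit i j]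
    simp only [Finset.sum_add_distrib]
    congr 1
    · rw [Finset.sum_comm]
      refine Finset.sum_congr rfl fun j _ => ?_
      rw [Finset.sum_ite_eq' Finset.univ i₀
        (fun _ => if i₀ < j then -(((-1 : ℤ) ^ (j : ℕ)) • (L.anchor (v j) a • ψ (fun m => v (j.succAbove m)))) else 0)]
      simp
    · refine Finset.sum_congr rfl fun i _ => ?_
      rw [Finset.sum_ite_eq' Finset.univ i₀
        (fun _ => if i < i₀ then -(((-1 : ℤ) ^ (i : ℕ)) • (L.anchor (v i) a • ψ (fun m => v (i.succAbove m)))) else 0)]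
      simp
  have hzero : (∑ j : Fin (p+2), (if j = i₀ then 0 else ((-1 : ℤ) ^ (j : ℕ)) • (L.anchor (v j) a • ψ (fun m => v (j.succAbove m)))))
      + ((∑ j : Fin (p+2), (if i₀ < j then -(((-1 : ℤ) ^ (j : ℕ)) • (L.anchor (v j) a • ψ (fun m => v (j.succAbove m)))) else 0))
        + ∑ j : Fin (p+2), (if j < i₀ then -(((-1 : ℤ) ^ (j : ℕ)) • (L.anchor (v j) a • ψ (fun m => v (j.succAbove m)))) else 0)) = 0 := by
    rw [← Finset.sum_add_distrib, ← Finset.sum_add_distrib]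
    apply Finset.sum_eq_zero
    intro j _
    rcases lt_trichotomy j i₀ with hlt | heq | hgt
    · rw [if_neg (ne_of_lt hlt), if_neg (not_lt.2 (le_of_lt hlt)), if_pos hlt]
      abel
    · subst heq
      simp
    · rw [if_neg (ne_of_gt hgt), if_pos hgt, if_neg (not_lt.2 (le_of_lt hgt))]
      abel
  rw [hsum1, hsum2, hX, smul_add, add_add_add_comm, hzero, add_zero]

/-- the differential sends `A`-multilinear alternating maps to `A`-linear ones. -/
theorem lrD_A_multilinear (D : LRConnection L W) {p : ℕ}
    (ψ : AlternatingMap A g W (Fin (p + 1)))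
    (v : Fin (p + 2) → g) (i : Fin (p + 2)) (a : A) (x : g) :
    lrD D ⇑ψ (Function.update v i (a • x)) = a • lrD D ⇑ψ (Function.update v i x) := by
  have h1 : Function.update v i (a • x)
      = Function.update (Function.update v i x) i (a • (Function.update v i x) i) := by
    rw [Function.update_self, Function.update_idem]
  rw [h1, lrD_smul_update]
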